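/- If rational numbers k,m,n,p,q,t,u,v with mnpq ≠ 0 and q ≠ 0, m²+n² ≠ 0 satisfy t = p/q and k = pmn(u²+1)(v²+1)/(q(m²+n²)), then both equations k(m²+n²)(p²+q²)/(4mnpq) = (t²+1)(u²+1)(v²+1)/4 and k(m²+n²)/(mn) = t(u²+1)(v²+1) hold. -/
import Mathlib


theorem pentagon_matching_conditions (k m n p q t u v : ℚ)
    (hmnpq : m * n * p * q ≠ 0) (hq : q ≠ 0) (hmn : m^2 + n^2 ≠ 0)
    (ht : t = p / q)
    (hk : k = p * m * n * (u^2 + 1) * (v^2 + 1) / (q * (m^2 + n^2))) :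
    k * (m^2 + n^2) * (p^2 + q^2) / (4 * m * n * p * q) =
      (t^2 + 1) * (u^2 + 1) * (v^2 + 1) / 4 ∧
    k * (m^2 + n^2) / (m * n) = t * (u^2 + 1) * (v^2 + 1) := by
  have hm : m ≠ 0 := fun h => hmnpq (by simp [h])
  have hn : n ≠ 0 := fun h => hmnpq (by simp [h])
  have hp : p ≠ 0 := fun h => hmnpq (by simp [h])
  subst ht hk
  constructor <;> field_simp <;> ring
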